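/- A block construction of a {±1}-protocol with block parameters (k₀, n₀, ℓ₀) satisfying 2ℓ₀ ≤ n₀ must satisfy 2ℓ₀ + log₂(C(n₀,ℓ₀)) − log₂(C(2ℓ₀,ℓ₀)) ≥ k₀. -/

import Mathlib

open Finset
open scoped Classical

/-- The sign vector associated to a boolean vector. -/
private def sgnVec {k : ℕ} (σ : Fin k → Bool) : Fin k → ℝ := fun i => if σ i then 1 else -1

private lemma sgnVec_pm {k : ℕ} (σ : Fin k → Bool) (i : Fin k) :
    sgnVec σ i = 1 ∨ sgnVec σ i = -1 := by
  unfold sgnVec; split <;> simp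

private lemma sgnVec_inj_coord {k : ℕ} {σ τ : Fin k → Bool} {i : Fin k}
    (h : sgnVec σ i = sgnVec τ i) : σ i = τ i := by
  unfold sgnVec at h
  cases hσ : σ i <;> cases hτ : τ i <;> simp [hσ, hτ] at h ⊢ <;> norm_num at h

/-- A span of at most `d` vectors contains at most `2^d` sign vectors. -/
private lemma card_sgn_mem_span_le {k d : ℕ} (t : Finset (Fin k → ℝ)) (ht : t.card ≤ d) :
    (Finset.univ.filter
      (fun σ : Fin k → Bool => sgnVec σ ∈ Submodule.span ℝ (t : Set (Fin k → ℝ)))).card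
      ≤ 2 ^ d := by
  classical
  set V := Submodule.span ℝ (t : Set (Fin k → ℝ)) with hV
  set P : Finset (Fin k) → Prop :=
    fun B => ∀ x ∈ V, ∀ y ∈ V, (∀ j ∈ B, x j = y j) → x = y with hP
  have hPuniv : P Finset.univ := fun x _ y _ h => funext fun j => h j (mem_univ j)
  obtain ⟨B, hBmem, hBmin⟩ := Finset.exists_min_image
    (Finset.univ.filter fun B => P B) Finset.card ⟨Finset.univ, by simp only [Finset.mem_filter]; exact ⟨Finset.mem_univ _, hPuniv⟩⟩
  have hBP : P B := (Finset.mem_filter.mp hBmem).2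
  -- For each j ∈ B, produce a vector in V vanishing on B \ {j} but not at j
  have key : ∀ j : {x // x ∈ B}, ∃ u, u ∈ V ∧ (∀ j' ∈ B.erase j.1, u j' = 0) ∧ u j.1 ≠ 0 := by
    rintro ⟨j, hj⟩
    have hnot : ¬ P (B.erase j) := by
      intro hPe
      have := hBmin (B.erase j) (by simp only [Finset.mem_filter]; exact ⟨Finset.mem_univ _, hPe⟩)
      have hlt : (B.erase j).card < B.card := Finset.card_erase_lt_of_mem hj
      omega
    simp only [hP] at hnot
    push_neg at hnot
    obtain ⟨x, hx, y, hy, hagree, hxy⟩ := hnot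
    refine ⟨x - y, sub_mem hx hy, fun j' hj' => ?_, fun hzero => ?_⟩
    · simp [sub_eq_zero, hagree j' hj']
    · apply hxy
      apply hBP x hx y hy
      intro j' hj'
      by_cases hjj : j' = j
      · subst hjj
        have : x j' - y j' = 0 := hzero
        linarith
      · exact hagree j' (Finset.mem_erase.mpr ⟨hjj, hj'⟩)
  choose u humem huzero hune using key
  -- the u's are linearly independent
  have hli : LinearIndependent ℝ u := by
    rw [Fintype.linearIndependent_iff]
    intro g hg j
    have h := congrFun hg j.1
    simp only [Finset.sum_apply, Pi.smul_apply, smul_eq_mul, Pi.zero_apply] at h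
    rw [Finset.sum_eq_single j] at h
    · rcases mul_eq_zero.mp h with h' | h'
      · exact h'
      · exact absurd h' (hune j)
    · intro i _ hij
      have : u i j.1 = 0 := huzero i j.1 (Finset.mem_erase.mpr
        ⟨fun hc => hij (Subtype.ext hc.symm ▸ rfl), j.2⟩)
      simp [this]
    · intro hj; exact absurd (Finset.mem_univ j) hj
  have hliV : LinearIndependent ℝ (fun j => (⟨u j, humem j⟩ : V)) :=
    LinearIndependent.of_comp V.subtype (by exact hli)
  have hcardB : B.card ≤ d := by
    have h1 : Fintype.card {x // x ∈ B} ≤ Module.finrank ℝ V :=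
      hliV.fintype_card_le_finrank
    have h2 : Module.finrank ℝ V ≤ t.card := finrank_span_finset_le_card t
    simpa [Fintype.card_coe] using le_trans h1 (le_trans h2 ht)
  -- inject sign vectors in V into B → Bool
  have hinj : (Finset.univ.filter
      (fun σ : Fin k → Bool => sgnVec σ ∈ V)).card ≤ (Finset.univ : Finset ({x // x ∈ B} → Bool)).card := by
    apply Finset.card_le_card_of_injOn (fun σ (j : {x // x ∈ B}) => σ j.1)
      (fun _ _ => Finset.mem_univ _)
    intro σ hσ τ hτ hrestr
    have hσV : sgnVec σ ∈ V := (Finset.mem_filter.mp hσ).2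
    have hτV : sgnVec τ ∈ V := (Finset.mem_filter.mp hτ).2
    have : sgnVec σ = sgnVec τ := by
      apply hBP _ hσV _ hτV
      intro j hj
      have : σ j = τ j := congrFun hrestr ⟨j, hj⟩
      unfold sgnVec
      rw [this]
    funext i
    exact sgnVec_inj_coord (congrFun this i)
  calc (Finset.univ.filter (fun σ : Fin k → Bool => sgnVec σ ∈ V)).card
      ≤ (Finset.univ : Finset ({x // x ∈ B} → Bool)).card := hinj
    _ = 2 ^ B.card := by
        rw [Finset.card_univ, Fintype.card_fun, Fintype.card_coe, Fintype.card_bool]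
    _ ≤ 2 ^ d := Nat.pow_le_pow_right (by norm_num) hcardB

theorem block_construction_lower_bound (k₀ n₀ ℓ₀ : ℕ) (hℓn : 2 * ℓ₀ ≤ n₀)
    (M : Matrix (Fin k₀) (Fin n₀) ℝ)
    (hM : ∀ w : Fin k₀ → ℝ, (∀ i, w i = 1 ∨ w i = -1) →
      ∃ S : Finset (Fin n₀), S.card ≤ ℓ₀ ∧
        w ∈ Submodule.span ℝ ((fun j => fun i => M i j) '' ↑S)) :
    2 * (ℓ₀ : ℝ) + Real.logb 2 (Nat.choose n₀ ℓ₀) - Real.logb 2 (Nat.choose (2 * ℓ₀) ℓ₀)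
      ≥ (k₀ : ℝ) := by
  classical
  set cols : Fin n₀ → (Fin k₀ → ℝ) := fun j i => M i j with hcols
  -- Main counting inequality
  have count : 2 ^ k₀ * Nat.choose (n₀ - ℓ₀) ℓ₀ ≤ Nat.choose n₀ (2 * ℓ₀) * 2 ^ (2 * ℓ₀) := by
    calc 2 ^ k₀ * Nat.choose (n₀ - ℓ₀) ℓ₀
        = ∑ _σ : Fin k₀ → Bool, Nat.choose (n₀ - ℓ₀) ℓ₀ := by
          rw [Finset.sum_const, Finset.card_univ, Fintype.card_fun, Fintype.card_bool,
            Fintype.card_fin, smul_eq_mul]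
      _ ≤ ∑ σ : Fin k₀ → Bool,
            ((Finset.powersetCard (2 * ℓ₀) Finset.univ).filter
              (fun T : Finset (Fin n₀) =>
                sgnVec σ ∈ Submodule.span ℝ ((T.image cols : Finset _) : Set (Fin k₀ → ℝ)))).card := by
          apply Finset.sum_le_sum
          intro σ _
          obtain ⟨S₀, hS₀card, hS₀mem⟩ := hM (sgnVec σ) (sgnVec_pm σ)
          obtain ⟨S, hS₀S, -, hScard⟩ := Finset.exists_subsuperset_card_eq
            (Finset.subset_univ S₀) hS₀card (by simp; omega)
          have hmemS : sgnVec σ ∈ Submodule.span ℝ ((S.image cols : Finset _) : Set (Fin k₀ → ℝ)) := by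
            rw [Finset.coe_image]
            exact Submodule.span_mono
              (Set.image_mono (f := cols) (Finset.coe_subset.mpr hS₀S)) hS₀mem
          -- inject powersetCard ℓ₀ Sᶜ into the filter via U ↦ S ∪ U
          have hinj : (Finset.powersetCard ℓ₀ Sᶜ).card ≤
              ((Finset.powersetCard (2 * ℓ₀) Finset.univ).filter
                (fun T : Finset (Fin n₀) =>
                  sgnVec σ ∈ Submodule.span ℝ ((T.image cols : Finset _) : Set (Fin k₀ → ℝ)))).card := by
            apply Finset.card_le_card_of_injOn (fun U => S ∪ U)
            · intro U hU
              rw [Finset.mem_coe, Finset.mem_powersetCard] at hU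
              obtain ⟨hUsub, hUcard⟩ := hU
              have hdisj : Disjoint S U :=
                Finset.disjoint_left.mpr fun a ha hb =>
                  (Finset.mem_compl.mp (hUsub hb)) ha
              rw [Finset.mem_coe, Finset.mem_filter, Finset.mem_powersetCard]
              refine ⟨⟨Finset.subset_univ _, ?_⟩, ?_⟩
              · rw [Finset.card_union_of_disjoint hdisj, hScard, hUcard]; omega
              · refine Submodule.span_mono ?_ hmemS
                rw [Finset.coe_image, Finset.coe_image]
                exact Set.image_mono (f := cols) (by simp [Finset.coe_subset])
            · intro U₁ h₁ U₂ h₂ heq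
              rw [Finset.mem_coe, Finset.mem_powersetCard] at h₁ h₂
              have d₁ : Disjoint S U₁ := Finset.disjoint_left.mpr fun a ha hb =>
                (Finset.mem_compl.mp (h₁.1 hb)) ha
              have d₂ : Disjoint S U₂ := Finset.disjoint_left.mpr fun a ha hb =>
                (Finset.mem_compl.mp (h₂.1 hb)) ha
              have : (S ∪ U₁) \ S = (S ∪ U₂) \ S := by
                rw [show S ∪ U₁ = S ∪ U₂ from heq]
              rwa [Finset.union_sdiff_cancel_left d₁,
                Finset.union_sdiff_cancel_left d₂] at this
          refine le_trans (le_of_eq ?_) hinj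
          rw [Finset.card_powersetCard, Finset.card_compl, Fintype.card_fin, hScard]
      _ = ∑ T ∈ Finset.powersetCard (2 * ℓ₀) (Finset.univ : Finset (Fin n₀)),
            (Finset.univ.filter (fun σ : Fin k₀ → Bool =>
              sgnVec σ ∈ Submodule.span ℝ ((T.image cols : Finset _) : Set (Fin k₀ → ℝ)))).card := by
          simp only [Finset.card_filter]
          exact Finset.sum_comm
      _ ≤ ∑ _T ∈ Finset.powersetCard (2 * ℓ₀) (Finset.univ : Finset (Fin n₀)), 2 ^ (2 * ℓ₀) := by
          apply Finset.sum_le_sum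
          intro T hT
          rw [Finset.mem_powersetCard] at hT
          exact card_sgn_mem_span_le (T.image cols)
            (le_trans Finset.card_image_le (le_of_eq hT.2))
      _ = Nat.choose n₀ (2 * ℓ₀) * 2 ^ (2 * ℓ₀) := by
          rw [Finset.sum_const, Finset.card_powersetCard, Finset.card_univ, Fintype.card_fin,
            smul_eq_mul]
  -- Trinomial revision
  have trin : Nat.choose n₀ (2 * ℓ₀) * Nat.choose (2 * ℓ₀) ℓ₀
      = Nat.choose n₀ ℓ₀ * Nat.choose (n₀ - ℓ₀) ℓ₀ := by
    have := Nat.choose_mul (n := n₀) (k := 2 * ℓ₀) (s := ℓ₀) (by omega)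
    simpa [show 2 * ℓ₀ - ℓ₀ = ℓ₀ by omega] using this
  have hpos : 0 < Nat.choose (n₀ - ℓ₀) ℓ₀ := Nat.choose_pos (by omega)
  -- Deduce 2^k₀ * C(2ℓ,ℓ) ≤ C(n,ℓ) * 2^(2ℓ)
  have key : 2 ^ k₀ * Nat.choose (2 * ℓ₀) ℓ₀ ≤ Nat.choose n₀ ℓ₀ * 2 ^ (2 * ℓ₀) := by
    have h1 : 2 ^ k₀ * Nat.choose (2 * ℓ₀) ℓ₀ * Nat.choose (n₀ - ℓ₀) ℓ₀
        ≤ Nat.choose n₀ ℓ₀ * 2 ^ (2 * ℓ₀) * Nat.choose (n₀ - ℓ₀) ℓ₀ := by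
      calc 2 ^ k₀ * Nat.choose (2 * ℓ₀) ℓ₀ * Nat.choose (n₀ - ℓ₀) ℓ₀
          = (2 ^ k₀ * Nat.choose (n₀ - ℓ₀) ℓ₀) * Nat.choose (2 * ℓ₀) ℓ₀ := by ring
        _ ≤ (Nat.choose n₀ (2 * ℓ₀) * 2 ^ (2 * ℓ₀)) * Nat.choose (2 * ℓ₀) ℓ₀ :=
            Nat.mul_le_mul_right _ count
        _ = (Nat.choose n₀ (2 * ℓ₀) * Nat.choose (2 * ℓ₀) ℓ₀) * 2 ^ (2 * ℓ₀) := by ring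
        _ = Nat.choose n₀ ℓ₀ * 2 ^ (2 * ℓ₀) * Nat.choose (n₀ - ℓ₀) ℓ₀ := by rw [trin]; ring
    exact Nat.le_of_mul_le_mul_right h1 hpos
  -- Pass to reals and logs
  have hc1 : (0 : ℝ) < (Nat.choose n₀ ℓ₀ : ℝ) := by
    exact_mod_cast Nat.choose_pos (by omega)
  have hc2 : (0 : ℝ) < (Nat.choose (2 * ℓ₀) ℓ₀ : ℝ) := by
    exact_mod_cast Nat.choose_pos (by omega)
  have hR : (2 : ℝ) ^ k₀ * (Nat.choose (2 * ℓ₀) ℓ₀ : ℝ)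
      ≤ (Nat.choose n₀ ℓ₀ : ℝ) * (2 : ℝ) ^ (2 * ℓ₀) := by exact_mod_cast key
  have hlog := Real.logb_le_logb_of_le (b := 2) one_lt_two
    (by positivity) hR
  rw [Real.logb_mul (by positivity) (ne_of_gt hc2),
    Real.logb_mul (ne_of_gt hc1) (by positivity),
    Real.logb_pow, Real.logb_pow, Real.logb_self_eq_one one_lt_two] at hlog
  push_cast at hlog ⊢
  linarith
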